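/- Let h : [0,1]^n → ℝ^{n+1} be a continuous map that is differentiable at no point of [0,1]^n. Then there exists a unit vector v ∈ ℝ^{n+1} such that the function x ↦ ⟨v, h(x)⟩ is non-differentiable at Lebesgue-almost every x ∈ [0,1]^n. -/

import Mathlib

open MeasureTheory Metric Set Filter
open scoped ENNReal NNReal Topology RealInnerProductSpace

noncomputable section

/-- A unit vector `d` is a limit direction of `A` at `x`: there is a sequence of points of
`A \ {x}` converging to `x` whose normalized directions from `x` converge to `d`. -/
def IsLimitDirection {E : Type*} [NormedAddCommGroup E] [NormedSpace ℝ E]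
    (A : Set E) (x d : E) : Prop :=
  ‖d‖ = 1 ∧ ∃ y : ℕ → E, (∀ k, y k ∈ A ∧ y k ≠ x) ∧
    Tendsto y atTop (𝓝 x) ∧
    Tendsto (fun k => (‖y k - x‖)⁻¹ • (y k - x)) atTop (𝓝 d)

/-- `A` has a tangent line at `x`: the set of limit directions of `A` at `x` is `{v, -v}`
for some unit vector `v`. -/
def HasTangentLineAt {E : Type*} [NormedAddCommGroup E] [NormedSpace ℝ E]
    (A : Set E) (x : E) : Prop :=
  ∃ v : E, ‖v‖ = 1 ∧ {d | IsLimitDirection A x d} = {v, -v}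

/-- Lower scaled oscillation of `f` at `x`, where `f` is regarded as a map defined on the
metric space `A`:  `liminf_{r→0+} (sup_{y ∈ A, dist x y ≤ r} ‖f y - f x‖) / r`. -/
def lOscOn {E F : Type*} [PseudoMetricSpace E] [NormedAddCommGroup F]
    (f : E → F) (A : Set E) (x : E) : ℝ≥0∞ :=
  Filter.liminf
    (fun r : ℝ => (⨆ y ∈ {y ∈ A | dist x y ≤ r}, (‖f y - f x‖₊ : ℝ≥0∞)) / ENNReal.ofReal r)
    (𝓝[>] (0:ℝ))

/-- Upper scaled oscillation of `f` at `x`, where `f` is regarded as a map defined on the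
metric space `A`:  `limsup_{r→0+} (sup_{y ∈ A, dist x y ≤ r} ‖f y - f x‖) / r`. -/
def uOscOn {E F : Type*} [PseudoMetricSpace E] [NormedAddCommGroup F]
    (f : E → F) (A : Set E) (x : E) : ℝ≥0∞ :=
  Filter.limsup
    (fun r : ℝ => (⨆ y ∈ {y ∈ A | dist x y ≤ r}, (‖f y - f x‖₊ : ℝ≥0∞)) / ENNReal.ofReal r)
    (𝓝[>] (0:ℝ))

/-- The closed unit cube `[0,1]^n` in `ℝ^n`. -/
def unitCube (n : ℕ) : Set (EuclideanSpace ℝ (Fin n)) :=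
  {x | ∀ i, x i ∈ Set.Icc (0:ℝ) 1}

/-- A set has σ-finite `s`-dimensional Hausdorff measure if it is a countable union of
sets of finite `H^s` measure. -/
def SigmaFiniteH {E : Type*} [EMetricSpace E] [MeasurableSpace E] [BorelSpace E]
    (s : ℝ) (C : Set E) : Prop :=
  ∃ F : ℕ → Set E, C = ⋃ k, F k ∧ ∀ k, μH[s] (F k) < ⊤

/-- The Hausdorff measure associated to a gauge function `g`. -/
def gaugeHausdorff {E : Type*} [EMetricSpace E] [MeasurableSpace E] [BorelSpace E]
    (g : ℝ → ℝ) : Measure E :=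
  Measure.mkMetric (fun d : ℝ≥0∞ => ENNReal.ofReal (g d.toReal))

/-- The hyperplane through `x` with normal vector `θ`. -/
def hyperplaneThrough {E : Type*} [NormedAddCommGroup E] [InnerProductSpace ℝ E]
    (θ x : E) : Set E := {y | ⟪y - x, θ⟫ = 0}

/-- `x` is an isolated point of `A`. -/
def IsIsolatedIn {E : Type*} [PseudoMetricSpace E] (x : E) (A : Set E) : Prop :=
  x ∈ A ∧ ∃ r > 0, A ∩ Metric.ball x r = {x}

/-- Concatenation of two Euclidean vectors as a point of `ℝ^{n+m}`. -/
def concatPt {n m : ℕ} (x : EuclideanSpace ℝ (Fin n)) (y : EuclideanSpace ℝ (Fin m)) :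
    EuclideanSpace ℝ (Fin (n + m)) :=
  (EuclideanSpace.equiv (Fin (n + m)) ℝ).symm (Fin.append (fun i => x i) (fun j => y j))

/-- A point of `ℝ^{n+1}` given by a vector in `ℝ^n` and a last (vertical) coordinate. -/
def snocPt {n : ℕ} (x : EuclideanSpace ℝ (Fin n)) (t : ℝ) :
    EuclideanSpace ℝ (Fin (n + 1)) :=
  (EuclideanSpace.equiv (Fin (n + 1)) ℝ).symm (Fin.snoc (fun i => x i) t)

/-- If `h : [0,1]^n → ℝ^{n+1}` is continuous and differentiable at no point
of `[0,1]^n`, then there is a unit vector `v ∈ ℝ^{n+1}` such that `x ↦ ⟪v, h x⟫` is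
non-differentiable at Lebesgue-almost every point of `[0,1]^n`. -/
theorem stmt_14 (n : ℕ)
    (h : EuclideanSpace ℝ (Fin n) → EuclideanSpace ℝ (Fin (n + 1)))
    (hc : ContinuousOn h (unitCube n))
    (hnd : ∀ x ∈ unitCube n, ¬ DifferentiableWithinAt ℝ h (unitCube n) x) :
    ∃ v : EuclideanSpace ℝ (Fin (n + 1)), ‖v‖ = 1 ∧
      volume {x ∈ unitCube n |
        DifferentiableWithinAt ℝ (fun y => ⟪v, h y⟫) (unitCube n) x} = 0 := by
  classical
  let E := EuclideanSpace ℝ (Fin n)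
  let F := EuclideanSpace ℝ (Fin (n + 1))
  set s : Set (EuclideanSpace ℝ (Fin n)) := unitCube n with hs_def
  -- `s` is closed and convex
  have hs_eq : s = ⋂ i, (fun x : EuclideanSpace ℝ (Fin n) => x i) ⁻¹' Set.Icc (0:ℝ) 1 := by
    ext x; simp [hs_def, unitCube]
  have hs_closed : IsClosed s := by
    rw [hs_eq]
    exact isClosed_iInter fun i =>
      isClosed_Icc.preimage (EuclideanSpace.proj (𝕜 := ℝ) i).continuous
  have hs_conv : Convex ℝ s := by
    rw [hs_eq]
    exact convex_iInter fun i =>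
      (convex_Icc (0:ℝ) 1).linear_preimage ((EuclideanSpace.proj (𝕜 := ℝ) i).toLinearMap)
  -- Tietze extension of `h` to a globally continuous map `H`
  haveI : TietzeExtension F :=
    TietzeExtension.of_homeo
      (PiLp.continuousLinearEquiv 2 ℝ (fun _ : Fin (n+1) => ℝ)).toHomeomorph
  obtain ⟨H, hHres⟩ :=
    ContinuousMap.exists_restrict_eq (Y := F) hs_closed ⟨s.restrict h, hc.restrict⟩
  have hHh : ∀ y ∈ s, H y = h y := fun y hy => ContinuousMap.congr_fun hHres ⟨y, hy⟩
  -- the jointly measurable differentiability set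
  set D : Set (F × E) :=
    {p : F × E | DifferentiableAt ℝ (fun y => ⟪p.1, H y⟫) p.2 ∧ p.2 ∈ interior s} with hD_def
  have hDmeas : MeasurableSet D := by
    have h1 : MeasurableSet {p : F × E | DifferentiableAt ℝ (fun y => ⟪p.1, H y⟫) p.2} := by
      exact measurableSet_of_differentiableAt_with_param ℝ
        (f := fun (v : F) (y : E) => ⟪v, H y⟫)
        (continuous_fst.inner (H.continuous.comp continuous_snd))
    exact h1.inter (isOpen_interior.measurableSet.preimage measurable_snd)
  -- each `x`-slice of `D` is a proper subspace, hence null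
  have key : ∀ x : E, volume ((fun v : F => (v, x)) ⁻¹' D) = 0 := by
    intro x
    by_cases hx : x ∈ interior s
    · have hxs : x ∈ s := interior_subset hx
      set V : Submodule ℝ F :=
        { carrier := {v : F | DifferentiableAt ℝ (fun y => ⟪v, H y⟫) x}
          add_mem' := fun {a b} ha hb => by
            simp only [Set.mem_setOf_eq, inner_add_left] at ha hb ⊢
            exact ha.add hb
          zero_mem' := by
            simp only [Set.mem_setOf_eq, inner_zero_left]
            exact differentiableAt_const 0
          smul_mem' := fun c a ha => by
            simpa only [Set.mem_setOf_eq, real_inner_smul_left] using ha.const_mul c } with hV_def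
      have hVne : V ≠ ⊤ := by
        intro htop
        refine hnd x hxs ?_
        have hcoord : ∀ i, DifferentiableAt ℝ (fun y => H y i) x := by
          intro i
          have hv : (EuclideanSpace.single i (1:ℝ)) ∈ V := htop ▸ Submodule.mem_top
          have hv' : DifferentiableAt ℝ
              (fun y => ⟪EuclideanSpace.single i (1:ℝ), H y⟫) x := hv
          simpa [EuclideanSpace.inner_single_left] using hv'
        have hHdiff : DifferentiableAt ℝ H x := differentiableAt_euclidean.2 hcoord
        exact hHdiff.differentiableWithinAt.congr (fun y hy => (hHh y hy).symm)
          (hHh x hxs).symm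
      have hpre : (fun v : F => (v, x)) ⁻¹' D = (V : Set F) := by
        ext v
        simp only [hD_def, Set.mem_preimage, Set.mem_setOf_eq, hx, and_true,
          SetLike.mem_coe]
        exact Iff.rfl
      rw [hpre]
      exact Measure.addHaar_submodule volume V hVne
    · have : (fun v : F => (v, x)) ⁻¹' D = ∅ := by
        ext v; simp [hD_def, hx]
      simp [this]
  -- Fubini: a.e. `v`, the `v`-slice is null
  have hprod : ((volume : Measure F).prod (volume : Measure E)) D = 0 := by
    rw [Measure.prod_apply_symm hDmeas]
    simp only [key, lintegral_zero]
  have hae : ∀ᵐ v : F ∂volume, volume (Prod.mk v ⁻¹' D) = 0 := by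
    have := (Measure.measure_prod_null (μ := (volume : Measure F))
      (ν := (volume : Measure E)) hDmeas).1 hprod
    filter_upwards [this] with v hv using hv
  -- a.e. `v ≠ 0`
  haveI : Nontrivial F := ⟨⟨EuclideanSpace.single 0 (1:ℝ), 0, by
    intro hcontra
    have := congrArg (fun w : EuclideanSpace ℝ (Fin (n+1)) => w 0) hcontra
    simp [EuclideanSpace.single_apply] at this⟩⟩
  have h0 : ∀ᵐ v : F ∂volume, v ≠ 0 := by
    have hz : volume ({(0:F)} : Set F) = 0 := by
      have := Measure.addHaar_submodule (volume : Measure F) ⊥ bot_ne_top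
      simpa using this
    rw [ae_iff]
    simpa using hz
  haveI : (ae (volume : Measure F)).NeBot := by
    rw [ae_neBot]
    intro hμ
    have : (volume : Measure F) Set.univ ≠ 0 :=
      (isOpen_univ.measure_ne_zero volume ⟨0, trivial⟩)
    exact this (by rw [hμ]; simp)
  obtain ⟨v, hv0, hvnull⟩ := (h0.and hae).exists
  refine ⟨‖v‖⁻¹ • v, norm_smul_inv_norm hv0, ?_⟩
  -- the bad set is contained in `frontier s ∪` a null slice
  have hsubset : {x ∈ s | DifferentiableWithinAt ℝ (fun y => ⟪‖v‖⁻¹ • v, h y⟫) s x}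
      ⊆ (s \ interior s) ∪ (Prod.mk v ⁻¹' D) := by
    rintro x ⟨hxs, hdiff⟩
    by_cases hxi : x ∈ interior s
    · right
      have h1 : DifferentiableWithinAt ℝ (fun y => ‖v‖ • ⟪‖v‖⁻¹ • v, h y⟫) s x :=
        hdiff.const_smul ‖v‖
      have heq : (fun y => ‖v‖ • ⟪‖v‖⁻¹ • v, h y⟫) = fun y => ⟪v, h y⟫ := by
        funext y
        rw [real_inner_smul_left, smul_eq_mul, ← mul_assoc,
          mul_inv_cancel₀ (norm_ne_zero_iff.2 hv0), one_mul]
      rw [heq] at h1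
      have h2 : DifferentiableWithinAt ℝ (fun y => ⟪v, H y⟫) s x :=
        h1.congr (fun y hy => by rw [hHh y hy]) (by rw [hHh x hxs])
      have h3 : DifferentiableAt ℝ (fun y => ⟪v, H y⟫) x :=
        h2.differentiableAt (mem_interior_iff_mem_nhds.1 hxi)
      exact ⟨h3, hxi⟩
    · exact Or.inl ⟨hxs, hxi⟩
  refine measure_mono_null hsubset (measure_union_null ?_ hvnull)
  refine measure_mono_null (fun x hx => ?_) (hs_conv.addHaar_frontier volume)
  exact ⟨subset_closure hx.1, hx.2⟩

end
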